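/- For every ε > 0 and s > 0, the superdifferential of u_ε at the point (s,0) is D⁺u_ε(s,0) = {−1/(2(s+ε)²)} × [−1/(s+ε), 1/(s+ε)], i.e. (τ,p) ∈ D⁺u_ε(s,0) if and only if τ = −1/(2(s+ε)²) and |p| ≤ 1/(s+ε). -/

import Mathlib

open Filter Topology Set

noncomputable section

/-- `u_ε(t,x) = (|x| − 1)²/(2(t + ε))`. -/
def uEps (ε : ℝ) (X : ℝ × ℝ) : ℝ := (|X.2| - 1) ^ 2 / (2 * (X.1 + ε))

/-- Superdifferential of `w : ℝ × ℝ → ℝ` at `X` (with the Euclidean norm on `ℝ²`):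
`P ∈ D⁺w(X)` iff `limsup_{Y→X} (w(Y)−w(X)−⟨P,Y−X⟩)/|Y−X| ≤ 0`. -/
def superDiff2 (w : ℝ × ℝ → ℝ) (X P : ℝ × ℝ) : Prop :=
  ∀ ε > 0, ∀ᶠ Y in 𝓝[≠] X,
    w Y - w X - (P.1 * (Y.1 - X.1) + P.2 * (Y.2 - X.2)) ≤
      ε * Real.sqrt ((Y.1 - X.1) ^ 2 + (Y.2 - X.2) ^ 2)

private lemma eq_of_forall_pos' {a b : ℝ} (h : ∀ δ > 0, b - δ ≤ a ∧ a ≤ b + δ) : a = b := by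
  have h1 : a ≤ b := le_of_forall_pos_le_add fun δ hδ => (h δ hδ).2
  have h2 : b ≤ a := le_of_forall_pos_le_add fun δ hδ => by linarith [(h δ hδ).1]
  linarith

private lemma key_alg (a m h τ : ℝ) (ha : 0 < a) (hB : 0 < a + h)
    (hτ : τ = -(1 / (2 * a ^ 2))) :
    (m - 1) ^ 2 / (2 * (a + h)) - 1 / (2 * a) - τ * h + m / a =
      (a * m + h) ^ 2 / (2 * a ^ 2 * (a + h)) := by
  subst hτ; field_simp; ring

private lemma key_bound (a m h R δ : ℝ) (ha : 0 < a) (hB : a / 2 ≤ a + h)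
    (hm0 : 0 ≤ m) (hmR : m ≤ R) (hhR : |h| ≤ R) (hRs : R * (a + 1) ^ 2 ≤ δ * a ^ 3)
    (hδ : 0 < δ) :
    (a * m + h) ^ 2 / (2 * a ^ 2 * (a + h)) ≤ δ * R := by
  have hBpos : 0 < a + h := by linarith
  have hR0 : 0 ≤ R := le_trans (abs_nonneg h) hhR
  rw [div_le_iff₀ (by positivity)]
  have h1 : (a * m + h) ^ 2 ≤ ((a + 1) * R) ^ 2 := by
    have hh1 : h ≤ R := le_trans (le_abs_self _) hhR
    have hh2 : -R ≤ h := (abs_le.mp hhR).1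
    have ham : a * m ≤ a * R := mul_le_mul_of_nonneg_left hmR ha.le
    have ham0 : 0 ≤ a * m := mul_nonneg ha.le hm0
    have u1 : a * m + h ≤ (a + 1) * R := by nlinarith
    have u2 : -((a + 1) * R) ≤ a * m + h := by nlinarith
    exact sq_le_sq' u2 u1
  have h3 : R * (a + 1) ^ 2 * R ≤ δ * a ^ 3 * R := mul_le_mul_of_nonneg_right hRs hR0
  have h4 : δ * a ^ 3 * R ≤ δ * R * (2 * a ^ 2 * (a + h)) := by
    have h5 : a ^ 3 ≤ 2 * a ^ 2 * (a + h) := by nlinarith [sq_nonneg a]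
    calc δ * a ^ 3 * R = δ * R * a ^ 3 := by ring
      _ ≤ δ * R * (2 * a ^ 2 * (a + h)) :=
        mul_le_mul_of_nonneg_left h5 (by positivity)
  nlinarith [h1, h3, h4]

set_option maxHeartbeats 1600000

/-- for every `ε > 0` and `s > 0`,
`D⁺u_ε(s,0) = {−1/(2(s+ε)²)} × [−1/(s+ε), 1/(s+ε)]`. -/
theorem statement18 (ε : ℝ) (hε : 0 < ε) (s : ℝ) (hs : 0 < s) (τ p : ℝ) :
    superDiff2 (uEps ε) (s, 0) (τ, p) ↔
      τ = -1 / (2 * (s + ε) ^ 2) ∧ |p| ≤ 1 / (s + ε) := by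
  have ha : 0 < s + ε := by linarith
  constructor
  · intro H
    have bounds : ∀ δ > 0,
        (-1 / (2 * (s + ε) ^ 2) - δ ≤ τ ∧ τ ≤ -1 / (2 * (s + ε) ^ 2) + δ) ∧
        (-1 / (s + ε) - δ ≤ p ∧ p ≤ 1 / (s + ε) + δ) := by
      intro δ hδ
      have H' := H δ hδ
      rw [eventually_nhdsWithin_iff, Metric.eventually_nhds_iff] at H'
      obtain ⟨r, hr, hb⟩ := H'
      obtain ⟨h, hh0, hhr, hha, hh1⟩ : ∃ h : ℝ, 0 < h ∧ h < r ∧ h ≤ (s + ε) / 2 ∧ h ≤ 1 :=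
        ⟨min (r / 2) (min ((s + ε) / 2) 1),
         lt_min (by linarith) (lt_min (by linarith) one_pos),
         lt_of_le_of_lt (min_le_left _ _) (by linarith),
         le_trans (min_le_right _ _) (min_le_left _ _),
         le_trans (min_le_right _ _) (min_le_right _ _)⟩
      have hB : 0 < s + h + ε := by linarith
      have hB' : 0 < s - h + ε := by linarith
      have u0 : uEps ε (s, 0) = 1 / (2 * (s + ε)) := by simp [uEps]
      have sqh : Real.sqrt (h ^ 2) = h := Real.sqrt_sq hh0.le
      -- point (s + h, 0)
      have k1 := hb (y := (s + h, 0))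
        (by
          rw [Prod.dist_eq, Real.dist_eq, Real.dist_eq]
          simp only [sub_self, abs_zero]
          rw [show s + h - s = h by ring, abs_of_pos hh0, max_eq_left hh0.le]
          exact hhr)
        (by
          simp only [mem_compl_iff, mem_singleton_iff, Prod.mk.injEq, not_and]
          intro hc _; exact absurd (by linarith : h = 0) hh0.ne')
      simp only [uEps, u0] at k1
      rw [show s + h - s = h by ring] at k1
      norm_num at k1
      rw [sqh] at k1
      have k1c : (s + h + ε)⁻¹ * (1/2 : ℝ) - (s + ε)⁻¹ * (1/2) - τ * h ≤ δ * h := by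
        linarith
      have c1 := mul_le_mul_of_nonneg_right k1c
        (show (0:ℝ) ≤ 2 * (s + h + ε) * (s + ε) by positivity)
      have e1 : ((s + h + ε)⁻¹ * (1/2 : ℝ) - (s + ε)⁻¹ * (1/2) - τ * h) *
          (2 * (s + h + ε) * (s + ε)) =
          (s + ε) - (s + h + ε) - τ * h * (2 * (s + h + ε) * (s + ε)) := by
        field_simp
      have m1 : h * (-1) ≤ h * ((τ + δ) * (2 * (s + h + ε) * (s + ε))) := by linarith [c1, e1]
      have m2 : (-1:ℝ) ≤ (τ + δ) * (2 * (s + h + ε) * (s + ε)) :=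
        le_of_mul_le_mul_left m1 hh0
      have kk1 : -1 / (2 * (s + ε) ^ 2) - δ ≤ τ := by
        have h2A : (0:ℝ) < 2 * (s + ε) ^ 2 := by positivity
        rcases le_or_gt 0 (τ + δ) with hc | hc
        · have : -1 / (2 * (s + ε) ^ 2) < 0 := div_neg_of_neg_of_pos (by norm_num) h2A
          linarith
        · have hAB : 2 * (s + ε) ^ 2 ≤ 2 * (s + h + ε) * (s + ε) := by nlinarith
          have hm : (τ + δ) * (2 * (s + h + ε) * (s + ε)) ≤ (τ + δ) * (2 * (s + ε) ^ 2) :=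
            mul_le_mul_of_nonpos_left hAB hc.le
          have := (div_le_iff₀ h2A).mpr (show (-1:ℝ) ≤ (τ + δ) * (2 * (s + ε) ^ 2) by linarith)
          linarith
      -- point (s - h, 0)
      have k2 := hb (y := (s - h, 0))
        (by
          rw [Prod.dist_eq, Real.dist_eq, Real.dist_eq]
          simp only [sub_self, abs_zero]
          rw [show s - h - s = -h by ring, abs_neg, abs_of_pos hh0, max_eq_left hh0.le]
          exact hhr)
        (by
          simp only [mem_compl_iff, mem_singleton_iff, Prod.mk.injEq, not_and]
          intro hc _; exact absurd (by linarith : h = 0) hh0.ne')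
      simp only [uEps, u0] at k2
      rw [show s - h - s = -h by ring] at k2
      norm_num at k2
      rw [sqh] at k2
      have k2c : (s - h + ε)⁻¹ * (1/2 : ℝ) - (s + ε)⁻¹ * (1/2) + τ * h ≤ δ * h := by
        linarith
      have c2 := mul_le_mul_of_nonneg_right k2c
        (show (0:ℝ) ≤ 2 * (s - h + ε) * (s + ε) by positivity)
      have e2 : ((s - h + ε)⁻¹ * (1/2 : ℝ) - (s + ε)⁻¹ * (1/2) + τ * h) *
          (2 * (s - h + ε) * (s + ε)) =
          (s + ε) - (s - h + ε) + τ * h * (2 * (s - h + ε) * (s + ε)) := by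
        field_simp
      have m1' : h * ((τ - δ) * (2 * (s - h + ε) * (s + ε))) ≤ h * (-1) := by
        linarith [c2, e2]
      have m2' : (τ - δ) * (2 * (s - h + ε) * (s + ε)) ≤ -1 :=
        le_of_mul_le_mul_left m1' hh0
      have kk2 : τ ≤ -1 / (2 * (s + ε) ^ 2) + δ := by
        have h2A : (0:ℝ) < 2 * (s + ε) ^ 2 := by positivity
        have hP : (0:ℝ) < 2 * (s - h + ε) * (s + ε) := by positivity
        have hneg : τ - δ < 0 := by nlinarith
        have hAB : 2 * (s - h + ε) * (s + ε) ≤ 2 * (s + ε) ^ 2 := by nlinarith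
        have hm : (τ - δ) * (2 * (s + ε) ^ 2) ≤ (τ - δ) * (2 * (s - h + ε) * (s + ε)) :=
          mul_le_mul_of_nonpos_left hAB hneg.le
        have := (le_div_iff₀ h2A).mpr (show (τ - δ) * (2 * (s + ε) ^ 2) ≤ -1 by linarith)
        linarith
      -- point (s, h)
      have k3 := hb (y := (s, h))
        (by
          rw [Prod.dist_eq, Real.dist_eq, Real.dist_eq]
          simp only [sub_self, abs_zero, sub_zero]
          rw [abs_of_pos hh0, max_eq_right hh0.le]
          exact hhr)
        (by
          simp only [mem_compl_iff, mem_singleton_iff, Prod.mk.injEq, not_and]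
          intro _ hc; exact hh0.ne' hc)
      simp only [uEps, u0] at k3
      norm_num at k3
      rw [abs_of_pos hh0, sqh] at k3
      have k3c : (h - 1) ^ 2 / (2 * (s + ε)) - (s + ε)⁻¹ * (1/2 : ℝ) - p * h ≤ δ * h := by
        linarith
      have c3 := mul_le_mul_of_nonneg_right k3c
        (show (0:ℝ) ≤ 2 * (s + ε) by positivity)
      have e3 : ((h - 1) ^ 2 / (2 * (s + ε)) - (s + ε)⁻¹ * (1/2 : ℝ) - p * h) * (2 * (s + ε)) =
          (h - 1) ^ 2 - 1 - p * h * (2 * (s + ε)) := by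
        field_simp
      have m3 : h * (h - 2) ≤ h * ((p + δ) * (2 * (s + ε))) := by linarith [c3, e3]
      have m4 : h - 2 ≤ (p + δ) * (2 * (s + ε)) := le_of_mul_le_mul_left m3 hh0
      have kk3 : -1 / (s + ε) - δ ≤ p := by
        have := (div_le_iff₀ ha).mpr (show (-1:ℝ) ≤ (p + δ) * (s + ε) by linarith)
        linarith
      -- point (s, -h)
      have k4 := hb (y := (s, -h))
        (by
          rw [Prod.dist_eq, Real.dist_eq, Real.dist_eq]
          simp only [sub_self, abs_zero, sub_zero]
          rw [abs_neg, abs_of_pos hh0, max_eq_right hh0.le]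
          exact hhr)
        (by
          simp only [mem_compl_iff, mem_singleton_iff, Prod.mk.injEq, not_and]
          intro _ hc; exact absurd (by linarith : h = 0) hh0.ne')
      simp only [uEps, u0] at k4
      norm_num at k4
      rw [abs_of_pos hh0, sqh] at k4
      have k4c : (h - 1) ^ 2 / (2 * (s + ε)) - (s + ε)⁻¹ * (1/2 : ℝ) + p * h ≤ δ * h := by
        linarith
      have c4 := mul_le_mul_of_nonneg_right k4c
        (show (0:ℝ) ≤ 2 * (s + ε) by positivity)
      have e4 : ((h - 1) ^ 2 / (2 * (s + ε)) - (s + ε)⁻¹ * (1/2 : ℝ) + p * h) * (2 * (s + ε)) =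
          (h - 1) ^ 2 - 1 + p * h * (2 * (s + ε)) := by
        field_simp
      have m5 : h * ((p - δ) * (2 * (s + ε))) ≤ h * (2 - h) := by linarith [c4, e4]
      have m6 : (p - δ) * (2 * (s + ε)) ≤ 2 - h := le_of_mul_le_mul_left m5 hh0
      have kk4 : p ≤ 1 / (s + ε) + δ := by
        have := (le_div_iff₀ ha).mpr (show (p - δ) * (s + ε) ≤ 1 by linarith)
        linarith
      exact ⟨⟨kk1, kk2⟩, ⟨kk3, kk4⟩⟩
    refine ⟨eq_of_forall_pos' fun δ hδ => ?_, ?_⟩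
    · have := (bounds δ hδ).1
      exact ⟨by linarith [this.1], this.2⟩
    · rw [abs_le]
      constructor
      · have : -(1 / (s + ε)) ≤ p := by
          rw [neg_le]
          apply le_of_forall_pos_le_add fun δ hδ => ?_
          have := (bounds δ hδ).2.1
          rw [neg_div] at this
          linarith
        linarith
      · exact le_of_forall_pos_le_add fun δ hδ => (bounds δ hδ).2.2
  · rintro ⟨hτ, hp⟩
    intro δ hδ
    have hτ' : τ = -(1 / (2 * (s + ε) ^ 2)) := by rw [hτ]; ring
    apply Filter.Eventually.filter_mono nhdsWithin_le_nhds
    rw [Metric.eventually_nhds_iff]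
    refine ⟨min ((s + ε) / 2) (δ * (s + ε) ^ 3 / (2 * ((s + ε) + 1) ^ 2)), by positivity, ?_⟩
    rintro ⟨t, x⟩ hY
    rw [Prod.dist_eq] at hY
    have hY1 : |t - s| < min ((s + ε) / 2) (δ * (s + ε) ^ 3 / (2 * ((s + ε) + 1) ^ 2)) := by
      calc |t - s| = dist t s := (Real.dist_eq t s).symm
        _ ≤ _ := le_max_left _ _
        _ < _ := hY
    have hY2 : |x - 0| < min ((s + ε) / 2) (δ * (s + ε) ^ 3 / (2 * ((s + ε) + 1) ^ 2)) := by
      calc |x - 0| = dist x 0 := (Real.dist_eq x 0).symm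
        _ ≤ _ := le_max_right _ _
        _ < _ := hY
    have habsh : |t - s| < (s + ε) / 2 := lt_of_lt_of_le hY1 (min_le_left _ _)
    have hx : |x - 0| < (s + ε) / 2 := lt_of_lt_of_le hY2 (min_le_left _ _)
    have hBge : (s + ε) / 2 ≤ (s + ε) + (t - s) := by
      have := (abs_lt.mp habsh).1
      linarith
    have hBpos : 0 < (s + ε) + (t - s) := by linarith
    set R := Real.sqrt ((t - s) ^ 2 + (x - 0) ^ 2) with hR_def
    have hR0 : 0 ≤ R := Real.sqrt_nonneg _
    have hRh : |t - s| ≤ R := Real.abs_le_sqrt (by nlinarith [sq_nonneg (x - 0)])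
    have hRx : |x| ≤ R := by
      have : |x - 0| ≤ R := Real.abs_le_sqrt (by nlinarith [sq_nonneg (t - s)])
      simpa using this
    have hRsmall : R * ((s + ε) + 1) ^ 2 ≤ δ * (s + ε) ^ 3 := by
      have h1 : |t - s| < δ * (s + ε) ^ 3 / (2 * ((s + ε) + 1) ^ 2) :=
        lt_of_lt_of_le hY1 (min_le_right _ _)
      have h2 : |x - 0| < δ * (s + ε) ^ 3 / (2 * ((s + ε) + 1) ^ 2) :=
        lt_of_lt_of_le hY2 (min_le_right _ _)
      have hRle : R ≤ |t - s| + |x - 0| := by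
        rw [hR_def]
        refine Real.sqrt_le_iff.mpr ⟨by positivity, ?_⟩
        nlinarith [abs_nonneg (t - s), abs_nonneg (x - 0), sq_abs (t - s), sq_abs (x - 0),
          mul_nonneg (abs_nonneg (t - s)) (abs_nonneg (x - 0))]
      have hq : (0:ℝ) < 2 * ((s + ε) + 1) ^ 2 := by positivity
      have h3 : R < δ * (s + ε) ^ 3 / ((s + ε) + 1) ^ 2 := by
        have := fun c => (add_div (δ * (s + ε) ^ 3 / (2 * ((s + ε) + 1) ^ 2))
          (δ * (s + ε) ^ 3 / (2 * ((s + ε) + 1) ^ 2)) c).symm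
        have he : δ * (s + ε) ^ 3 / (2 * ((s + ε) + 1) ^ 2) +
            δ * (s + ε) ^ 3 / (2 * ((s + ε) + 1) ^ 2) = δ * (s + ε) ^ 3 / ((s + ε) + 1) ^ 2 := by
          field_simp
          ring
        linarith
      have hq2 : (0:ℝ) < ((s + ε) + 1) ^ 2 := by positivity
      exact (le_div_iff₀ hq2).mp h3.le
    have u0 : uEps ε (s, 0) = 1 / (2 * (s + ε)) := by simp [uEps]
    have uY : uEps ε (t, x) = (|x| - 1) ^ 2 / (2 * ((s + ε) + (t - s))) := by
      simp only [uEps]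
      ring_nf
    have hpx : -(p * (x - 0)) ≤ |x| / (s + ε) := by
      have h1 : -(p * (x - 0)) ≤ |p * (x - 0)| := neg_le_abs _
      have h2 : |p * (x - 0)| = |p| * |x| := by rw [abs_mul, sub_zero]
      have h3 : |p| * |x| ≤ (1 / (s + ε)) * |x| := mul_le_mul_of_nonneg_right hp (abs_nonneg x)
      calc -(p * (x - 0)) ≤ |p| * |x| := h2 ▸ h1
        _ ≤ (1 / (s + ε)) * |x| := h3
        _ = |x| / (s + ε) := by ring
    show uEps ε (t, x) - uEps ε (s, 0) - (τ * (t - s) + p * (x - 0)) ≤ δ * R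
    calc uEps ε (t, x) - uEps ε (s, 0) - (τ * (t - s) + p * (x - 0))
        ≤ (|x| - 1) ^ 2 / (2 * ((s + ε) + (t - s))) - 1 / (2 * (s + ε)) - τ * (t - s)
            + |x| / (s + ε) := by
          rw [uY, u0]; linarith [hpx]
      _ = ((s + ε) * |x| + (t - s)) ^ 2 / (2 * (s + ε) ^ 2 * ((s + ε) + (t - s))) :=
          key_alg (s + ε) (|x|) (t - s) τ ha hBpos hτ'
      _ ≤ δ * R :=
          key_bound (s + ε) (|x|) (t - s) R δ ha hBge (abs_nonneg x) hRx hRh hRsmall hδ
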